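/- If H is an L-quasiconvex subgroup of a group G with rational structure (L, A), then H is finitely generated. -/
import Mathlib


def evalWord {A G : Type} [Group G] (a : A → G) (w : List A) : G :=
  (w.map a).prod

def IsRegularLang {A : Type} (L : Language A) : Prop :=
  ∃ (σ : Type) (_ : Fintype σ) (M : DFA A σ), M.accepts = L

lemma evalWord_append {A G : Type} [Group G] (a : A → G) (v u : List A) :
    evalWord a (v ++ u) = evalWord a v * evalWord a u := by
  simp [evalWord]

lemma evalWord_inv {A G : Type} [Group G] (a : A → G)
    (hinv : ∀ x : A, ∃ y : A, a y = (a x)⁻¹) (v : List A) :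
    ∃ v' : List A, v'.length = v.length ∧ evalWord a v' = (evalWord a v)⁻¹ := by
  induction v with
  | nil => exact ⟨[], rfl, by simp [evalWord]⟩
  | cons x t ih =>
    obtain ⟨t', ht'len, ht'⟩ := ih
    obtain ⟨y, hy⟩ := hinv x
    refine ⟨t' ++ [y], by simp [ht'len], ?_⟩
    rw [evalWord_append, ht']
    simp [evalWord, hy, mul_comm]

/-- An `L`-quasiconvex subgroup of a group with a rational structure is finitely generated. -/
theorem fg_of_quasiconvex
    {A G : Type} [Fintype A] [Group G] (a : A → G)
    (hinv : ∀ x : A, ∃ y : A, a y = (a x)⁻¹)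
    (L : Language A) (hreg : IsRegularLang L)
    (hsur : ∀ g : G, ∃ w ∈ L, evalWord a w = g)
    (H : Subgroup G)
    (hqc : ∃ K : ℕ, 0 < K ∧ ∀ w ∈ L, evalWord a w ∈ H → ∀ p : List A, p <+: w →
      ∃ u : List A, u.length ≤ K ∧ evalWord a (p ++ u) ∈ H) :
    H.FG := by
  classical
  obtain ⟨K, hK, hqc⟩ := hqc
  set S : Set G := (evalWord a '' {v : List A | v.length ≤ 2 * K + 1}) ∩ H with hS
  refine (Subgroup.fg_iff _).2 ⟨S, ?_, (Set.Finite.image _ (List.finite_length_le A _)).inter_of_left _⟩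
  apply le_antisymm
  · exact (Subgroup.closure_le H).2 fun g hg => hg.2
  · intro h hh
    obtain ⟨w, hwL, hwh⟩ := hsur h
    -- choose correcting suffixes
    have hwH : evalWord a w ∈ H := hwh ▸ hh
    have hu : ∀ i : ℕ, ∃ u : List A, u.length ≤ K ∧ evalWord a (w.take i ++ u) ∈ H := by
      intro i
      by_cases hi : i < w.length
      · exact hqc w hwL hwH (w.take i) (List.take_prefix i w)
      · refine ⟨[], Nat.zero_le _, ?_⟩
        rw [List.take_of_length_le (le_of_not_gt hi), List.append_nil]
        exact hwH
    choose u hulen huH using hu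
    -- u at the end can be taken empty
    have hulast : ∀ i, w.length ≤ i → evalWord a (w.take i) ∈ H := by
      intro i hi
      rw [List.take_of_length_le hi]; exact hwH
    -- main induction
    have key : ∀ i : ℕ, evalWord a (w.take i ++ u i) ∈ Subgroup.closure S := by
      intro i
      induction i with
      | zero =>
        apply Subgroup.subset_closure
        refine ⟨⟨w.take 0 ++ u 0, ?_, rfl⟩, huH 0⟩
        simp only [List.take_zero, List.nil_append, Set.mem_setOf_eq]
        exact le_trans (hulen 0) (by omega)
      | succ i ih =>
        have hstep : (evalWord a (w.take i ++ u i))⁻¹ *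
            evalWord a (w.take (i+1) ++ u (i+1)) ∈ Subgroup.closure S := by
          apply Subgroup.subset_closure
          constructor
          · -- find a short word for this element
            obtain ⟨v', hv'len, hv'⟩ := evalWord_inv a hinv (u i)
            refine ⟨v' ++ (w[i]?.toList ++ u (i+1)), ?_, ?_⟩
            · simp only [Set.mem_setOf_eq, List.length_append]
              have : w[i]?.toList.length ≤ 1 := by
                cases w[i]? <;> simp
              have h1 := hulen i
              have h2 := hulen (i+1)
              omega
            · rw [evalWord_append, evalWord_append, hv']
              rw [List.take_succ]
              simp only [evalWord_append]
              group
          · exact H.mul_mem (H.inv_mem (huH i)) (huH (i+1))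
        have := Subgroup.mul_mem _ ih hstep
        rwa [mul_inv_cancel_left] at this
    -- conclude at i = w.length
    have hfin := key w.length
    rw [List.take_length] at hfin
    have hunH : evalWord a (u w.length) ∈ H := by
      have h1 := huH w.length
      rw [List.take_length, evalWord_append] at h1
      have h2 := H.mul_mem (H.inv_mem hwH) h1
      rwa [inv_mul_cancel_left] at h2
    have hun : evalWord a (u w.length) ∈ Subgroup.closure S :=
      Subgroup.subset_closure ⟨⟨u w.length, le_trans (hulen _) (by omega), rfl⟩, hunH⟩
    have hfin2 := Subgroup.mul_mem _ hfin (Subgroup.inv_mem _ hun)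
    rwa [evalWord_append, mul_inv_cancel_right, hwh] at hfin2
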